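/- Let ν > 0, let f : [0,∞) → [0,+∞] satisfy f(0) = 1, f(x) ≥ q for all x > 0 for some q ∈ (0,1], and |f(x) − 1| ≤ c x² (with f(x) finite) for x ∈ [0,δ] for some c, δ > 0; let h : [0,∞) → ℝ be bounded with h(0) = 1 and |1 − h(x)| ≤ C₀ (1 ∧ x²) for some C₀ > 0. Then there exists C > 0 such that for all ε ∈ (0,1] and all nonzero k ∈ ℤ, ∫₀^∞ e^{−2t(1+νk²)} ( 1 − h(ε|k|) e^{−tνk²(f(ε|k|) − 1)} )² dt ≤ C min( k^{−2}, ε⁴ k² ), where the term h(ε|k|) e^{−tνk²(f(ε|k|)−1)} is interpreted as 0 when f(ε|k|) = +∞ and t > 0. -/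

import Mathlib

open MeasureTheory
open scoped ENNReal

section aux

open Set Real

lemma aux_exp_int {b : ℝ} (hb : 0 < b) :
    ∫ t in Ioi (0:ℝ), Real.exp (-(b * t)) = 1 / b := by
  have := integral_comp_mul_left_Ioi (fun u => Real.exp (-u)) 0 hb
  simp only [mul_zero, smul_eq_mul] at this
  rw [this, integral_exp_neg_Ioi_zero]
  simp [one_div]

lemma aux_exp_intOn {b : ℝ} (hb : 0 < b) :
    IntegrableOn (fun t : ℝ => Real.exp (-(b * t))) (Ioi 0) := by
  simpa [neg_mul] using exp_neg_integrableOn_Ioi 0 hb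

lemma aux_t_exp_le {b t : ℝ} (hb : 0 < b) :
    t * Real.exp (-(b * t)) ≤ 1 / b := by
  have h1 : b * t ≤ Real.exp (b * t) := by
    nlinarith [Real.add_one_le_exp (b * t)]
  have h2 : Real.exp (-(b*t)) * Real.exp (b*t) = 1 := by rw [← Real.exp_add]; simp
  have h3 : (0:ℝ) < Real.exp (-(b*t)) := Real.exp_pos _
  rw [le_div_iff₀ hb]
  nlinarith [mul_le_mul_of_nonneg_left h1 h3.le]

lemma aux_abs_exp_sub_one {s : ℝ} :
    |Real.exp s - 1| ≤ |s| * Real.exp (max s 0) := by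
  rcases le_or_gt 0 s with hs | hs
  · have h2 : Real.exp (-s) * Real.exp s = 1 := by rw [← Real.exp_add]; simp
    rw [abs_of_nonneg (by linarith [Real.one_le_exp hs]), abs_of_nonneg hs,
      max_eq_left hs]
    nlinarith [Real.add_one_le_exp (-s), Real.exp_pos s]
  · rw [abs_of_nonpos (by linarith [Real.exp_lt_one_iff.mpr hs]), abs_of_neg hs,
      max_eq_right hs.le, Real.exp_zero, mul_one]
    nlinarith [Real.add_one_le_exp s]

lemma aux_t2_exp_ptwise {a t : ℝ} (ha : 0 < a) (ht : 0 ≤ t) :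
    t^2 * Real.exp (-(a*t)) ≤ (16/a^2) * Real.exp (-(a/2*t)) := by
  have h1 := aux_t_exp_le (b := a/4) (t := t) (by linarith)
  have h2 : Real.exp (-(a*t))
      = Real.exp (-(a/4*t)) * Real.exp (-(a/4*t)) * Real.exp (-(a/2*t)) := by
    rw [← Real.exp_add, ← Real.exp_add]; ring_nf
  have h3 : (0:ℝ) < Real.exp (-(a/2*t)) := Real.exp_pos _
  have h4 : 0 ≤ t * Real.exp (-(a/4*t)) := mul_nonneg ht (Real.exp_pos _).le
  calc t^2 * Real.exp (-(a*t))
      = (t * Real.exp (-(a/4*t)))^2 * Real.exp (-(a/2*t)) := by rw [h2]; ring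
    _ ≤ (1/(a/4))^2 * Real.exp (-(a/2*t)) := by
        exact mul_le_mul_of_nonneg_right (pow_le_pow_left₀ h4 h1 2) h3.le
    _ = (16/a^2) * Real.exp (-(a/2*t)) := by
        norm_num [div_pow]

lemma aux_t2_exp_intOn {a : ℝ} (ha : 0 < a) :
    IntegrableOn (fun t : ℝ => t^2 * Real.exp (-(a*t))) (Ioi 0) := by
  apply Integrable.mono' ((aux_exp_intOn (b := a/2) (by linarith)).const_mul (16/a^2))
  · exact ((continuous_pow 2).mul (by fun_prop)).aestronglyMeasurable
  · filter_upwards [ae_restrict_mem measurableSet_Ioi] with t ht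
    rw [Real.norm_eq_abs, abs_of_nonneg (by positivity)]
    exact aux_t2_exp_ptwise ha (le_of_lt ht)

lemma aux_t2_exp_int_le {a : ℝ} (ha : 0 < a) :
    ∫ t in Ioi (0:ℝ), t^2 * Real.exp (-(a*t)) ≤ 32/a^3 := by
  have hmono := setIntegral_mono_on (aux_t2_exp_intOn ha)
      ((aux_exp_intOn (b := a/2) (by linarith)).const_mul (16/a^2))
      measurableSet_Ioi (fun t ht => aux_t2_exp_ptwise ha (le_of_lt ht))
  calc ∫ t in Ioi (0:ℝ), t^2 * Real.exp (-(a*t)) ≤ _ := hmono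
    _ = (16/a^2) * (1/(a/2)) := by
        rw [MeasureTheory.integral_const_mul, aux_exp_int (by linarith)]
    _ = 32/a^3 := by field_simp; ring

end aux

set_option maxHeartbeats 2000000 in
/-- Itô-isometry bound `E|θ̃_k(t) - θ_k(t)|² ≤ C (k⁻² ∧ ε⁴k²)`, written as a deterministic
integral estimate. The factor `h(ε|k|) e^{-tνk²(f(ε|k|)-1)}` is interpreted as `0` when
`f(ε|k|) = +∞`. -/
theorem stmt_11 (ν : ℝ) (hν : 0 < ν)
    (f : ℝ → ℝ≥0∞) (hf0 : f 0 = 1)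
    (q : ℝ) (hq0 : 0 < q) (hq1 : q ≤ 1) (hfq : ∀ x > (0 : ℝ), ENNReal.ofReal q ≤ f x)
    (c δ : ℝ) (hc : 0 < c) (hδ : 0 < δ)
    (hfsmooth : ∀ x ∈ Set.Icc (0 : ℝ) δ, f x ≠ ⊤ ∧ |(f x).toReal - 1| ≤ c * x ^ 2)
    (h : ℝ → ℝ) (B : ℝ) (hB : ∀ x, |h x| ≤ B) (hh0 : h 0 = 1)
    (C₀ : ℝ) (hC₀ : 0 < C₀) (hh : ∀ x, |1 - h x| ≤ C₀ * min 1 (x ^ 2)) :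
    ∃ C > 0, ∀ ε ∈ Set.Ioc (0 : ℝ) 1, ∀ k : ℤ, k ≠ 0 →
      (∫ t in Set.Ioi (0 : ℝ),
          Real.exp (-2 * t * (1 + ν * (k : ℝ) ^ 2)) *
            (1 - (if f (ε * |(k : ℝ)|) = ⊤ then 0
              else h (ε * |(k : ℝ)|) *
                Real.exp (-t * ν * (k : ℝ) ^ 2 * ((f (ε * |(k : ℝ)|)).toReal - 1)))) ^ 2) ≤
        C * min (((k : ℝ) ^ 2)⁻¹) (ε ^ 4 * (k : ℝ) ^ 2) := by
  have hB1 : 1 ≤ B := le_trans (by rw [hh0]; norm_num) (hB 0)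
  set C₁ : ℝ := (1 + B^2/q)/ν with hC₁def
  set C₂ : ℝ := C₀^2/ν + 8*B^2*c^2/(ν*q^3) with hC₂def
  set δ₀ : ℝ := min δ 1 with hδ₀def
  have hδ₀pos : 0 < δ₀ := lt_min hδ one_pos
  have hC₁pos : 0 < C₁ := by
    apply div_pos _ hν
    have : 0 ≤ B^2/q := div_nonneg (sq_nonneg B) hq0.le
    linarith
  refine ⟨max C₁ (max C₂ (C₁/δ₀^4)), lt_of_lt_of_le hC₁pos (le_max_left _ _), ?_⟩
  rintro ε ⟨hε0, hε1⟩ k hk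
  set K : ℝ := (k:ℝ)^2 with hKdef
  set x : ℝ := ε * |(k:ℝ)| with hxdef
  have hk1 : (1:ℝ) ≤ |(k:ℝ)| := by exact_mod_cast Int.one_le_abs hk
  have hK1 : 1 ≤ K := by nlinarith only [hk1, sq_abs ((k:ℝ)), hKdef]
  have hK0 : 0 < K := by linarith
  have hx0 : 0 < x := mul_pos hε0 (by linarith)
  have hνne : ν ≠ 0 := hν.ne'
  have hKne : K ≠ 0 := hK0.ne'
  have hqne : q ≠ 0 := hq0.ne'
  have hδ₀ne : δ₀ ≠ 0 := hδ₀pos.ne' 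
  have hx2K : x^2 = ε^2 * K := by rw [hxdef, mul_pow, sq_abs]
  have hx4 : x^4 = ε^4 * K^2 := by
    have : x^4 = (x^2)^2 := by ring
    rw [this, hx2K]; ring
  have ha1 : (0:ℝ) < 2 + 2*ν*K := by linarith only [mul_pos hν hK0]
  set I : ℝ := ∫ t in Set.Ioi (0 : ℝ),
      Real.exp (-2 * t * (1 + ν * K)) *
        (1 - (if f x = ⊤ then 0
          else h x * Real.exp (-t * ν * K * ((f x).toReal - 1)))) ^ 2 with hIdef
  have hA : I ≤ C₁ * K⁻¹ := by
    by_cases hft : f x = ⊤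
    · rw [hIdef]
      simp only [hft, if_true, eq_self_iff_true, sub_zero, one_pow, mul_one]
      have hval : (∫ t in Set.Ioi (0:ℝ), Real.exp (-2*t*(1+ν*K))) = 1/(2+2*ν*K) := by
        simp only [show ∀ t:ℝ, Real.exp (-2*t*(1+ν*K)) = Real.exp (-((2+2*ν*K)*t)) from
          fun t => by congr 1; ring]
        exact aux_exp_int ha1
      rw [hval]
      have h2 : (1:ℝ)/(2+2*ν*K) ≤ 1/(ν*K) := by
        apply one_div_le_one_div_of_le (mul_pos hν hK0); linarith only [mul_pos hν hK0]
      have h3 : C₁*K⁻¹ - 1/(ν*K) = (B^2/q)/(ν*K) := by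
        rw [hC₁def]; field_simp; ring
      have h4 : (0:ℝ) ≤ (B^2/q)/(ν*K) :=
        div_nonneg (div_nonneg (sq_nonneg B) hq0.le) (mul_pos hν hK0).le
      linarith only [h2, h3, h4]
    · rw [hIdef]
      simp only [if_neg hft]
      set F : ℝ := (f x).toReal with hFdef
      set H : ℝ := h x with hHdef
      have hFq : q ≤ F := by
        have h1 := hfq x hx0
        have h2 := ENNReal.toReal_mono hft h1
        rwa [ENNReal.toReal_ofReal hq0.le] at h2
      have ha2 : (0:ℝ) < 2 + 2*ν*K*F := by
        linarith only [mul_pos (mul_pos hν hK0) (lt_of_lt_of_le hq0 hFq)]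
      have hB' : H^2 ≤ B^2 := by
        have := pow_le_pow_left₀ (abs_nonneg H) (hB x) 2
        rwa [sq_abs] at this
      have hpt : ∀ t ∈ Set.Ioi (0:ℝ),
          Real.exp (-2*t*(1+ν*K)) * (1 - H * Real.exp (-t*ν*K*(F-1)))^2
            ≤ 2*Real.exp (-((2+2*ν*K)*t)) + (2*B^2)*Real.exp (-((2+2*ν*K*F)*t)) := by
        intro t ht
        have hE0 : Real.exp (-2*t*(1+ν*K)) = Real.exp (-((2+2*ν*K)*t)) := by congr 1; ring
        have hEE : Real.exp (-((2+2*ν*K)*t)) * (Real.exp (-t*ν*K*(F-1)))^2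
            = Real.exp (-((2+2*ν*K*F)*t)) := by
          rw [pow_two, ← Real.exp_add, ← Real.exp_add]; congr 1; ring
        have h1 : (1 - H*Real.exp (-t*ν*K*(F-1)))^2
            ≤ 2 + 2*B^2*(Real.exp (-t*ν*K*(F-1)))^2 := by
          linarith only [sq_nonneg (1 + H*Real.exp (-t*ν*K*(F-1))),
            mul_le_mul_of_nonneg_left hB' (sq_nonneg (Real.exp (-t*ν*K*(F-1))))]
        calc Real.exp (-2*t*(1+ν*K)) * (1 - H*Real.exp (-t*ν*K*(F-1)))^2
            ≤ Real.exp (-((2+2*ν*K)*t)) * (2 + 2*B^2*(Real.exp (-t*ν*K*(F-1)))^2) := by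
              rw [hE0]; exact mul_le_mul_of_nonneg_left h1 (Real.exp_pos _).le
          _ = 2*Real.exp (-((2+2*ν*K)*t))
              + (2*B^2)*(Real.exp (-((2+2*ν*K)*t)) * (Real.exp (-t*ν*K*(F-1)))^2) := by ring
          _ = 2*Real.exp (-((2+2*ν*K)*t)) + (2*B^2)*Real.exp (-((2+2*ν*K*F)*t)) := by rw [hEE]
      have hDint : IntegrableOn (fun t:ℝ => 2*Real.exp (-((2+2*ν*K)*t))
          + (2*B^2)*Real.exp (-((2+2*ν*K*F)*t))) (Set.Ioi 0) :=
        ((aux_exp_intOn ha1).const_mul 2).add ((aux_exp_intOn ha2).const_mul (2*B^2))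
      have hgcont : Continuous (fun t:ℝ =>
          Real.exp (-2*t*(1+ν*K)) * (1 - H * Real.exp (-t*ν*K*(F-1)))^2) := by fun_prop
      have hgint : IntegrableOn (fun t:ℝ =>
          Real.exp (-2*t*(1+ν*K)) * (1 - H * Real.exp (-t*ν*K*(F-1)))^2) (Set.Ioi 0) := by
        apply hDint.mono' hgcont.aestronglyMeasurable
        filter_upwards [ae_restrict_mem measurableSet_Ioi] with t ht
        rw [Real.norm_eq_abs, abs_of_nonneg (by positivity)]
        exact hpt t ht
      calc (∫ t in Set.Ioi (0:ℝ),
              Real.exp (-2*t*(1+ν*K)) * (1 - H * Real.exp (-t*ν*K*(F-1)))^2)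
          ≤ ∫ t in Set.Ioi (0:ℝ), (2*Real.exp (-((2+2*ν*K)*t))
              + (2*B^2)*Real.exp (-((2+2*ν*K*F)*t))) :=
            setIntegral_mono_on hgint hDint measurableSet_Ioi hpt
        _ = 2*(1/(2+2*ν*K)) + (2*B^2)*(1/(2+2*ν*K*F)) := by
            rw [MeasureTheory.integral_add ((aux_exp_intOn ha1).const_mul 2)
              ((aux_exp_intOn ha2).const_mul (2*B^2)),
              MeasureTheory.integral_const_mul, MeasureTheory.integral_const_mul,
              aux_exp_int ha1, aux_exp_int ha2]
        _ ≤ C₁ * K⁻¹ := by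
            have hd1 : 2*(1/(2+2*ν*K)) ≤ 1/(ν*K) := by
              rw [mul_one_div, div_le_div_iff₀ ha1 (mul_pos hν hK0)]
              linarith only [mul_pos hν hK0]
            have hd2 : (2*B^2)*(1/(2+2*ν*K*F)) ≤ B^2/(ν*K*q) := by
              rw [mul_one_div, div_le_div_iff₀ ha2 (mul_pos (mul_pos hν hK0) hq0)]
              linarith only [mul_nonneg (mul_nonneg (mul_pos hν hK0).le (sq_nonneg B))
                (sub_nonneg.mpr hFq), sq_nonneg B]
            have hd3 : 1/(ν*K) + B^2/(ν*K*q) = C₁ * K⁻¹ := by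
              rw [hC₁def]; field_simp
            linarith only [hd1, hd2, hd3]
  -- Bound B : if x ≤ δ₀ then I ≤ C₂ * (ε^4 * K)
  have hBB : x ≤ δ₀ → I ≤ C₂ * (ε^4 * K) := by
    intro hxδ
    have hxδ' : x ≤ δ := le_trans hxδ (min_le_left _ _)
    have hx1 : x ≤ 1 := le_trans hxδ (min_le_right _ _)
    obtain ⟨hft, hfx⟩ := hfsmooth x ⟨hx0.le, hxδ'⟩
    rw [hIdef]
    simp only [if_neg hft]
    set F : ℝ := (f x).toReal with hFdef
    set H : ℝ := h x with hHdef
    have hFq : q ≤ F := by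
      have h1 := hfq x hx0
      have h2 := ENNReal.toReal_mono hft h1
      rwa [ENNReal.toReal_ofReal hq0.le] at h2
    have ha2 : (0:ℝ) < 2 + 2*ν*q*K := by
      linarith only [mul_pos (mul_pos hν hq0) hK0]
    have hB' : H^2 ≤ B^2 := by
      have := pow_le_pow_left₀ (abs_nonneg H) (hB x) 2
      rwa [sq_abs] at this
    have hHx : |1 - H| ≤ C₀ * x^2 := by
      have h1 := hh x
      rwa [min_eq_right (by nlinarith only [hx0, hx1] : x^2 ≤ (1:ℝ))] at h1
    have hpt : ∀ t ∈ Set.Ioi (0:ℝ),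
        Real.exp (-2*t*(1+ν*K)) * (1 - H * Real.exp (-t*ν*K*(F-1)))^2
          ≤ (2*C₀^2*x^4)*Real.exp (-((2+2*ν*K)*t))
            + (2*B^2*ν^2*c^2*K^2*x^4)*(t^2*Real.exp (-((2+2*ν*q*K)*t))) := by
      intro t ht
      have ht0 : (0:ℝ) < t := ht
      have htνK : (0:ℝ) ≤ t*ν*K := mul_nonneg (mul_nonneg ht0.le hν.le) hK0.le
      have hM0 : (0:ℝ) ≤ t*ν*K*(c*x^2) :=
        mul_nonneg htνK (mul_nonneg hc.le (sq_nonneg x))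
      have hsabs : |(-t*ν*K*(F-1))| ≤ t*ν*K*(c*x^2) := by
        rw [show -t*ν*K*(F-1) = (t*ν*K)*(1-F) by ring, abs_mul,
          abs_of_nonneg htνK, abs_sub_comm]
        exact mul_le_mul_of_nonneg_left hfx htνK
      have hmaxle : max (-t*ν*K*(F-1)) 0 ≤ t*(ν*K*(1-q)) := by
        apply max_le
        · linarith only [mul_le_mul_of_nonneg_left hFq htνK]
        · exact mul_nonneg ht0.le (mul_nonneg (mul_nonneg hν.le hK0.le) (by linarith))
      have hE : |Real.exp (-t*ν*K*(F-1)) - 1|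
          ≤ (t*ν*K*(c*x^2)) * Real.exp (t*(ν*K*(1-q))) :=
        le_trans aux_abs_exp_sub_one
          (mul_le_mul hsabs (Real.exp_le_exp.mpr hmaxle) (Real.exp_pos _).le hM0)
      have hE2 : (Real.exp (-t*ν*K*(F-1)) - 1)^2
          ≤ ((t*ν*K*(c*x^2)) * Real.exp (t*(ν*K*(1-q))))^2 := by
        have := pow_le_pow_left₀ (abs_nonneg _) hE 2
        rwa [sq_abs] at this
      have hsq : (1 - H*Real.exp (-t*ν*K*(F-1)))^2
          ≤ 2*(1-H)^2 + 2*B^2*(Real.exp (-t*ν*K*(F-1)) - 1)^2 := by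
        linarith only [sq_nonneg ((1-H) - H*(1 - Real.exp (-t*ν*K*(F-1)))),
          mul_le_mul_of_nonneg_left hB' (sq_nonneg (Real.exp (-t*ν*K*(F-1)) - 1))]
      have hH2 : (1-H)^2 ≤ (C₀*x^2)^2 := by
        have := pow_le_pow_left₀ (abs_nonneg _) hHx 2
        rwa [sq_abs] at this
      have key : Real.exp (-((2+2*ν*K)*t)) * (Real.exp (t*(ν*K*(1-q))))^2
          = Real.exp (-((2+2*ν*q*K)*t)) := by
        rw [pow_two, ← Real.exp_add, ← Real.exp_add]; congr 1; ring
      have hE0 : Real.exp (-2*t*(1+ν*K)) = Real.exp (-((2+2*ν*K)*t)) := by congr 1; ring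
      calc Real.exp (-2*t*(1+ν*K)) * (1 - H*Real.exp (-t*ν*K*(F-1)))^2
          ≤ Real.exp (-((2+2*ν*K)*t)) * (2*(C₀*x^2)^2
              + 2*B^2*((t*ν*K*(c*x^2)) * Real.exp (t*(ν*K*(1-q))))^2) := by
            rw [hE0]
            apply mul_le_mul_of_nonneg_left _ (Real.exp_pos _).le
            linarith only [hsq, hH2, mul_le_mul_of_nonneg_left hE2 (sq_nonneg B)]
        _ = (2*C₀^2*x^4)*Real.exp (-((2+2*ν*K)*t))
            + (2*B^2*ν^2*c^2*K^2*x^4)*(t^2*Real.exp (-((2+2*ν*q*K)*t))) := by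
            rw [← key]; ring
    have hDint : IntegrableOn (fun t:ℝ => (2*C₀^2*x^4)*Real.exp (-((2+2*ν*K)*t))
        + (2*B^2*ν^2*c^2*K^2*x^4)*(t^2*Real.exp (-((2+2*ν*q*K)*t)))) (Set.Ioi 0) :=
      ((aux_exp_intOn ha1).const_mul _).add ((aux_t2_exp_intOn ha2).const_mul _)
    have hgcont : Continuous (fun t:ℝ =>
        Real.exp (-2*t*(1+ν*K)) * (1 - H * Real.exp (-t*ν*K*(F-1)))^2) := by fun_prop
    have hgint : IntegrableOn (fun t:ℝ =>
        Real.exp (-2*t*(1+ν*K)) * (1 - H * Real.exp (-t*ν*K*(F-1)))^2) (Set.Ioi 0) := by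
      apply hDint.mono' hgcont.aestronglyMeasurable
      filter_upwards [ae_restrict_mem measurableSet_Ioi] with t ht
      rw [Real.norm_eq_abs, abs_of_nonneg (by positivity)]
      exact hpt t ht
    have h2νqK : (0:ℝ) < 2*ν*q*K := by linarith only [mul_pos (mul_pos hν hq0) hK0]
    calc (∫ t in Set.Ioi (0:ℝ),
            Real.exp (-2*t*(1+ν*K)) * (1 - H * Real.exp (-t*ν*K*(F-1)))^2)
        ≤ ∫ t in Set.Ioi (0:ℝ), ((2*C₀^2*x^4)*Real.exp (-((2+2*ν*K)*t))
            + (2*B^2*ν^2*c^2*K^2*x^4)*(t^2*Real.exp (-((2+2*ν*q*K)*t)))) :=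
          setIntegral_mono_on hgint hDint measurableSet_Ioi hpt
      _ = (2*C₀^2*x^4)*(1/(2+2*ν*K))
          + (2*B^2*ν^2*c^2*K^2*x^4)*(∫ t in Set.Ioi (0:ℝ), t^2*Real.exp (-((2+2*ν*q*K)*t))) := by
          rw [MeasureTheory.integral_add ((aux_exp_intOn ha1).const_mul _)
            ((aux_t2_exp_intOn ha2).const_mul _),
            MeasureTheory.integral_const_mul, MeasureTheory.integral_const_mul, aux_exp_int ha1]
      _ ≤ (2*C₀^2*x^4)*(1/(2+2*ν*K)) + (2*B^2*ν^2*c^2*K^2*x^4)*(32/(2+2*ν*q*K)^3) := by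
          have h1 := aux_t2_exp_int_le ha2
          exact add_le_add_right (mul_le_mul_of_nonneg_left h1 (by positivity)) _
      _ ≤ C₂ * (ε^4 * K) := by
          have hterm1 : (2*C₀^2*x^4)*(1/(2+2*ν*K)) ≤ (C₀^2/ν)*(ε^4*K) := by
            rw [hx4, mul_one_div, div_le_iff₀ ha1, div_mul_eq_mul_div,
              div_mul_eq_mul_div, le_div_iff₀ hν]
            linarith only [mul_nonneg (mul_nonneg (sq_nonneg C₀) (pow_nonneg hε0.le 4)) hK0.le]
          have hterm2 : (2*B^2*ν^2*c^2*K^2*x^4)*(32/(2+2*ν*q*K)^3)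
              ≤ (8*B^2*c^2/(ν*q^3))*(ε^4*K) := by
            have hq3 : (0:ℝ) < (2*ν*q*K)^3 := pow_pos h2νqK 3
            have hd : (2*ν*q*K)^3 ≤ (2+2*ν*q*K)^3 :=
              pow_le_pow_left₀ h2νqK.le (by linarith) 3
            calc (2*B^2*ν^2*c^2*K^2*x^4)*(32/(2+2*ν*q*K)^3)
                ≤ (2*B^2*ν^2*c^2*K^2*x^4)*(32/(2*ν*q*K)^3) := by
                  apply mul_le_mul_of_nonneg_left _ (by positivity)
                  exact div_le_div_of_nonneg_left (by norm_num) hq3 hd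
              _ = (8*B^2*c^2/(ν*q^3))*(ε^4*K) := by
                  rw [hx4]; field_simp; ring
          refine le_trans (add_le_add hterm1 hterm2) (le_of_eq ?_)
          rw [hC₂def]; ring
  -- Conclusion
  have hI1 : I ≤ max C₁ (max C₂ (C₁/δ₀^4)) * K⁻¹ :=
    le_trans hA (mul_le_mul_of_nonneg_right (le_max_left _ _) (inv_nonneg.mpr hK0.le))
  have hI2 : I ≤ max C₁ (max C₂ (C₁/δ₀^4)) * (ε^4 * K) := by
    rcases le_or_gt x δ₀ with hxδ | hxδ
    · refine le_trans (hBB hxδ) (mul_le_mul_of_nonneg_right ?_ (mul_nonneg (by positivity) hK0.le))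
      exact le_trans (le_max_left _ _) (le_max_right _ _)
    · have hd4 : δ₀^4 ≤ x^4 := pow_le_pow_left₀ hδ₀pos.le hxδ.le 4
      have he : ε^4 * K = x^4 * K⁻¹ := by rw [hx4]; field_simp
      have h1 : δ₀^4 * K⁻¹ ≤ ε^4 * K := by
        rw [he]; exact mul_le_mul_of_nonneg_right hd4 (inv_nonneg.mpr hK0.le)
      have hstep : C₁ * K⁻¹ ≤ (C₁/δ₀^4) * (ε^4 * K) := by
        calc C₁ * K⁻¹ = (C₁/δ₀^4) * (δ₀^4 * K⁻¹) := by
              field_simp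
          _ ≤ (C₁/δ₀^4) * (ε^4 * K) :=
              mul_le_mul_of_nonneg_left h1 (div_nonneg hC₁pos.le (by positivity))
      refine le_trans hA (le_trans hstep (mul_le_mul_of_nonneg_right ?_ (mul_nonneg (by positivity) hK0.le)))
      exact le_trans (le_max_right _ _) (le_max_right _ _)
  rcases le_total K⁻¹ (ε^4*K) with hm | hm
  · rw [min_eq_left hm]; exact hI1
  · rw [min_eq_right hm]; exact hI2
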